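/- arXiv:2208.04041 — 4 statements merged into one kernel-verified Lean document; each statement's English description precedes it below -/
import Mathlib

section
/- The mutual attraction distance between the mutual agreement matrix MA^{2n} and the mutual disagreement matrix MD^{2n} equals 4(n−1)n², which is the maximum possible mutual attraction distance between two realizable (2n)×(2n−1) matrices. -/
/-- A Stable Roommates instance on `N` agents: each agent `a` has a strict
preference order over the other `N - 1` agents, given as an injective
enumeration `pref a : Fin (N - 1) → Fin N` avoiding `a` itself. -/
structure SRInstance (N : ℕ) where
  pref : Fin N → Fin (N - 1) → Fin N
  inj : ∀ a : Fin N, Function.Injective (pref a)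
  ne_self : ∀ (a : Fin N) (i : Fin (N - 1)), pref a i ≠ a

namespace SRInstance

/-- The (1-indexed) position of agent `b` in the preference order of agent `a`. -/
def posOf {N : ℕ} (I : SRInstance N) (a b : Fin N) : ℕ :=
  ∑ j ∈ Finset.univ.filter (fun j : Fin (N - 1) => I.pref a j = b), (j.1 + 1)

/-- The mutual attraction entry of agent `a` at index `i`: the position of `a`
in the preference order of the agent ranked `i`-th by `a`. -/
def MA {N : ℕ} (I : SRInstance N) (a : Fin N) (i : Fin (N - 1)) : ℕ :=
  I.posOf (I.pref a i) a

end SRInstance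

/-- The mutual attraction distance between two SR instances on `N` agents:
the minimum over bijections of the agent sets of the summed ℓ1-distances
between matched mutual attraction vectors. -/
noncomputable def distMAD {N : ℕ} (I I' : SRInstance N) : ℕ :=
  sInf { d | ∃ σ : Fin N ≃ Fin N,
    d = ∑ a : Fin N, ∑ i : Fin (N - 1), Nat.dist (I.MA a i) (I'.MA (σ a) i) }

/-- The mutual attraction distance between two `R × C` matrices over `ℕ`:
the minimum over bijections of the row sets of the summed ℓ1-distances between
matched rows. -/
noncomputable def matDist {R C : ℕ} (M M' : Fin R → Fin C → ℕ) : ℕ :=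
  sInf { d | ∃ σ : Fin R ≃ Fin R,
    d = ∑ i : Fin R, ∑ j : Fin C, Nat.dist (M i j) (M' (σ i) j) }

/-- The mutual agreement matrix `MA^{2n}`: all rows equal `(1, 2, …, 2n-1)`. -/
def MAmat (n : ℕ) : Fin (2 * n) → Fin (2 * n - 1) → ℕ := fun _ j => j.1 + 1

/-- The mutual disagreement matrix `MD^{2n}`: all rows equal
`(2n-1, 2n-2, …, 1)`. -/
def MDmat (n : ℕ) : Fin (2 * n) → Fin (2 * n - 1) → ℕ := fun _ j => 2 * n - (j.1 + 1)

/-- The identity matrix `ID^{2n}`: entry `(i,j)` (1-indexed) is `i` if `j ≥ i`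
and `i - 1` if `j < i`. -/
def IDmat (n : ℕ) : Fin (2 * n) → Fin (2 * n - 1) → ℕ := fun i j =>
  if i.1 ≤ j.1 then i.1 + 1 else i.1

namespace SRInstance

variable {N : ℕ} (I : SRInstance N)

lemma posOf_pref (c : Fin N) (j : Fin (N - 1)) : I.posOf c (I.pref c j) = j.1 + 1 := by
  unfold posOf
  have h : Finset.univ.filter (fun j' : Fin (N - 1) => I.pref c j' = I.pref c j) = {j} := by
    ext j'
    simp only [Finset.mem_filter, Finset.mem_univ, true_and, Finset.mem_singleton]
    exact ⟨fun h => I.inj c h, fun h => by rw [h]⟩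
  rw [h, Finset.sum_singleton]

lemma posOf_eq_zero (c a : Fin N) (h : ∀ j, I.pref c j ≠ a) : I.posOf c a = 0 := by
  unfold posOf
  have h2 : Finset.univ.filter (fun j : Fin (N - 1) => I.pref c j = a) = ∅ := by
    ext j; simp [h j]
  rw [h2, Finset.sum_empty]

lemma posOf_self (c : Fin N) : I.posOf c c = 0 :=
  posOf_eq_zero I c c (fun j => I.ne_self c j)

lemma posOf_le (c a : Fin N) : I.posOf c a ≤ N - 1 := by
  by_cases h : ∃ j, I.pref c j = a
  · obtain ⟨j, rfl⟩ := h
    rw [posOf_pref]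
    have := j.isLt; omega
  · push_neg at h
    rw [posOf_eq_zero I c a h]
    exact Nat.zero_le _

lemma MA_le (a : Fin N) (i : Fin (N - 1)) : I.MA a i ≤ N - 1 := posOf_le I _ _

lemma exists_of_lt_posOf (c a : Fin N) (t : ℕ) (h : t < I.posOf c a) :
    ∃ j, I.pref c j = a := by
  by_contra hc
  push_neg at hc
  rw [posOf_eq_zero I c a hc] at h
  omega

lemma exists_pref (a b : Fin N) (hb : b ≠ a) : ∃ i, I.pref a i = b := by
  have h1 : (Finset.univ.image (I.pref a)) ⊆ Finset.univ.erase a := by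
    intro x hx
    simp only [Finset.mem_image, Finset.mem_univ, true_and] at hx
    obtain ⟨i, rfl⟩ := hx
    exact Finset.mem_erase.2 ⟨I.ne_self a i, Finset.mem_univ _⟩
  have h2 : (Finset.univ.erase a).card ≤ (Finset.univ.image (I.pref a)).card := by
    rw [Finset.card_image_of_injective _ (I.inj a), Finset.card_erase_of_mem (Finset.mem_univ a)]
    simp
  have h3 := Finset.eq_of_subset_of_card_le h1 h2
  have hb' : b ∈ Finset.univ.erase a := Finset.mem_erase.2 ⟨hb, Finset.mem_univ _⟩
  rw [← h3] at hb'
  simpa using hb'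

lemma card_posOf_gt (c : Fin N) (t : ℕ) :
    (Finset.univ.filter fun a : Fin N => t < I.posOf c a).card
      = (Finset.univ.filter fun j : Fin (N - 1) => t < j.1 + 1).card := by
  symm
  apply Finset.card_bij (fun j _ => I.pref c j)
  · intro j hj
    simp only [Finset.mem_filter, Finset.mem_univ, true_and] at hj ⊢
    rw [posOf_pref]; exact hj
  · intro j₁ _ j₂ _ h
    exact I.inj c h
  · intro a ha
    simp only [Finset.mem_filter, Finset.mem_univ, true_and] at ha
    obtain ⟨j, hj⟩ := exists_of_lt_posOf I c a t ha
    refine ⟨j, ?_, hj⟩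
    simp only [Finset.mem_filter, Finset.mem_univ, true_and]
    rw [← hj, posOf_pref] at ha
    exact ha

lemma card_MA_gt_eq (t : ℕ) :
    (Finset.univ.filter fun p : Fin N × Fin (N - 1) => t < I.MA p.1 p.2).card
      = (Finset.univ.filter fun q : Fin N × Fin N => t < I.posOf q.1 q.2).card := by
  apply Finset.card_bij (fun p _ => (I.pref p.1 p.2, p.1))
  · intro p hp
    simp only [Finset.mem_filter, Finset.mem_univ, true_and] at hp ⊢
    exact hp
  · intro p₁ h₁ p₂ h₂ h
    have ha : p₁.1 = p₂.1 := congrArg Prod.snd h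
    have hi : I.pref p₁.1 p₁.2 = I.pref p₂.1 p₂.2 := congrArg Prod.fst h
    rw [ha] at hi
    exact Prod.ext ha (I.inj _ hi)
  · intro q hq
    simp only [Finset.mem_filter, Finset.mem_univ, true_and] at hq
    have hne : q.1 ≠ q.2 := by
      intro h; rw [h, posOf_self] at hq; omega
    obtain ⟨i, hi⟩ := exists_pref I q.2 q.1 hne
    refine ⟨(q.2, i), ?_, by simp [hi]⟩
    simp only [Finset.mem_filter, Finset.mem_univ, true_and, MA]
    exact Finset.mem_filter.2 ⟨Finset.mem_univ _, by show t < I.posOf (I.pref q.2 i) q.2; rw [hi]; exact hq⟩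

lemma card_fin_gt (m t : ℕ) :
    (Finset.univ.filter fun j : Fin m => t < j.1 + 1).card = m - t := by
  rw [Finset.card_filter, Fin.sum_univ_eq_sum_range (fun j => if t < j + 1 then 1 else 0),
    ← Finset.card_filter]
  have h : (Finset.range m).filter (fun j => t < j + 1) = Finset.Ico t m := by
    ext j; simp only [Finset.mem_filter, Finset.mem_range, Finset.mem_Ico]; omega
  rw [h, Nat.card_Ico]

lemma card_MA_count (t : ℕ) :
    (Finset.univ.filter fun p : Fin N × Fin (N - 1) => t < I.MA p.1 p.2).card
      = N * ((N - 1) - t) := by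
  rw [card_MA_gt_eq, Finset.card_filter, Fintype.sum_prod_type]
  have h : ∀ c : Fin N, (∑ a : Fin N, if t < I.posOf c a then 1 else 0) = (N - 1) - t := by
    intro c
    rw [← Finset.card_filter, card_posOf_gt, card_fin_gt]
  simp only [h, Finset.sum_const, Finset.card_univ, Fintype.card_fin, smul_eq_mul, mul_one]

end SRInstance

lemma dist_layer (m x y : ℕ) (hx : x ≤ m) (hy : y ≤ m) :
    Nat.dist x y = ∑ t ∈ Finset.range m, (if ¬(t < x ↔ t < y) then 1 else 0) := by
  rw [← Finset.card_filter]
  have h : (Finset.range m).filter (fun t => ¬(t < x ↔ t < y)) = Finset.Ico (min x y) (max x y) := by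
    ext t
    simp only [Finset.mem_filter, Finset.mem_range, Finset.mem_Ico]
    omega
  rw [h, Nat.card_Ico]
  simp [Nat.dist]
  omega

lemma card_ne_le {α : Type*} [Fintype α] (P Q : α → Prop) [DecidablePred P] [DecidablePred Q]
    (h : (Finset.univ.filter Q).card = (Finset.univ.filter P).card) :
    (Finset.univ.filter fun a => ¬(P a ↔ Q a)).card
      ≤ 2 * min (Finset.univ.filter P).card (Fintype.card α - (Finset.univ.filter P).card) := by
  classical
  have hsub : (Finset.univ.filter fun a => ¬(P a ↔ Q a))
      ⊆ (Finset.univ.filter fun a => P a ∧ ¬ Q a) ∪ (Finset.univ.filter fun a => Q a ∧ ¬ P a) := by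
    intro a ha
    simp only [Finset.mem_filter, Finset.mem_univ, true_and, Finset.mem_union] at ha ⊢
    tauto
  have h1 : (Finset.univ.filter fun a => P a ∧ ¬ Q a).card ≤ (Finset.univ.filter P).card :=
    Finset.card_le_card (fun a ha => by
      simp only [Finset.mem_filter, Finset.mem_univ, true_and] at ha ⊢; exact ha.1)
  have h2 : (Finset.univ.filter fun a => P a ∧ ¬ Q a).card
      ≤ (Finset.univ.filter fun a => ¬ Q a).card :=
    Finset.card_le_card (fun a ha => by
      simp only [Finset.mem_filter, Finset.mem_univ, true_and] at ha ⊢; exact ha.2)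
  have h3 : (Finset.univ.filter fun a => Q a ∧ ¬ P a).card ≤ (Finset.univ.filter Q).card :=
    Finset.card_le_card (fun a ha => by
      simp only [Finset.mem_filter, Finset.mem_univ, true_and] at ha ⊢; exact ha.1)
  have h4 : (Finset.univ.filter fun a => Q a ∧ ¬ P a).card
      ≤ (Finset.univ.filter fun a => ¬ P a).card :=
    Finset.card_le_card (fun a ha => by
      simp only [Finset.mem_filter, Finset.mem_univ, true_and] at ha ⊢; exact ha.2)
  have h5 := Finset.card_filter_add_card_filter_not (s := (Finset.univ : Finset α)) P
  have h6 := Finset.card_filter_add_card_filter_not (s := (Finset.univ : Finset α)) Q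
  have h7 := Finset.card_le_card hsub
  have h8 := Finset.card_union_le (Finset.univ.filter fun a => P a ∧ ¬ Q a)
    (Finset.univ.filter fun a => Q a ∧ ¬ P a)
  rw [Finset.card_univ] at h5 h6
  omega

lemma key_sum (n : ℕ) :
    ∑ j ∈ Finset.range (2 * n - 1), Nat.dist (j + 1) (2 * n - (j + 1)) = 2 * n * (n - 1) := by
  induction n with
  | zero => simp
  | succ n ih =>
    rcases Nat.eq_zero_or_pos n with rfl | hn
    · simp [Nat.dist]
    · have h1 : 2 * (n + 1) - 1 = (2 * n - 1) + 1 + 1 := by omega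
      rw [h1, Finset.sum_range_succ, Finset.sum_range_succ']
      have h2 : ∀ j ∈ Finset.range (2 * n - 1),
          Nat.dist ((j + 1) + 1) (2 * (n + 1) - ((j + 1) + 1))
            = Nat.dist (j + 1) (2 * n - (j + 1)) := by
        intro j hj
        simp only [Finset.mem_range] at hj
        have h3 : 2 * (n + 1) - (j + 1 + 1) = (2 * n - (j + 1)) + 1 := by omega
        rw [h3, ← Nat.succ_eq_add_one (j+1), ← Nat.succ_eq_add_one (2 * n - (j + 1)),
          Nat.dist_succ_succ]
      rw [Finset.sum_congr rfl h2, ih]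
      have e1 : Nat.dist (0 + 1) (2 * (n + 1) - (0 + 1)) = 2 * n := by
        simp [Nat.dist]; omega
      have e2 : Nat.dist (2 * n - 1 + 1 + 1) (2 * (n + 1) - (2 * n - 1 + 1 + 1)) = 2 * n := by
        simp [Nat.dist]; omega
      rw [e1, e2]
      obtain ⟨m, rfl⟩ : ∃ m, n = m + 1 := ⟨n - 1, by omega⟩
      simp only [Nat.add_sub_cancel]
      ring


lemma min_sum (n : ℕ) :
    ∑ t ∈ Finset.range (2 * n - 1), min (2 * n - 1 - t) t = n * (n - 1) := by
  induction n with
  | zero => simp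
  | succ n ih =>
    rcases Nat.eq_zero_or_pos n with rfl | hn
    · simp
    · have h1 : 2 * (n + 1) - 1 = (2 * n - 1) + 1 + 1 := by omega
      rw [h1, Finset.sum_range_succ, Finset.sum_range_succ']
      have h2 : ∀ j ∈ Finset.range (2 * n - 1),
          min (2 * n - 1 + 1 + 1 - (j + 1)) (j + 1) = min (2 * n - 1 - j) j + 1 := by
        intro j hj
        simp only [Finset.mem_range] at hj
        omega
      rw [Finset.sum_congr rfl h2, Finset.sum_add_distrib, ih, Finset.sum_const,
        Finset.card_range, smul_eq_mul, mul_one]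
      have e1 : min (2 * n - 1 + 1 + 1 - 0) 0 = 0 := by omega
      have e2 : min (2 * n - 1 + 1 + 1 - (2 * n - 1 + 1)) (2 * n - 1 + 1) = 1 := by omega
      rw [e1, e2]
      obtain ⟨m, rfl⟩ : ∃ m, n = m + 1 := ⟨n - 1, by omega⟩
      simp only [Nat.add_sub_cancel]
      ring_nf
      omega

/-- The mutual attraction distance between `MA^{2n}` and `MD^{2n}` equals
`4(n-1)n²`, which is the maximum possible mutual attraction distance between
two realizable `(2n) × (2n-1)` matrices, i.e., between any two SR instances on
`2n` agents. -/
theorem matDist_MA_MD (n : ℕ) :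
    matDist (MAmat n) (MDmat n) = 4 * (n - 1) * n ^ 2 ∧
    ∀ I I' : SRInstance (2 * n), distMAD I I' ≤ 4 * (n - 1) * n ^ 2 := by
  constructor
  · -- exact value of matDist (MAmat n) (MDmat n)
    have hset : { d | ∃ σ : Fin (2 * n) ≃ Fin (2 * n),
        d = ∑ i : Fin (2 * n), ∑ j : Fin (2 * n - 1),
          Nat.dist (MAmat n i j) (MDmat n (σ i) j) }
        = {(∑ _i : Fin (2 * n), ∑ j : Fin (2 * n - 1),
            Nat.dist (j.1 + 1) (2 * n - (j.1 + 1)))} := by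
      ext d
      simp only [Set.mem_setOf_eq, Set.mem_singleton_iff, MAmat, MDmat]
      constructor
      · rintro ⟨σ, rfl⟩; rfl
      · rintro rfl; exact ⟨Equiv.refl _, rfl⟩
    unfold matDist
    rw [hset, csInf_singleton, Finset.sum_const, Finset.card_univ, Fintype.card_fin,
      smul_eq_mul, Fin.sum_univ_eq_sum_range (fun j => Nat.dist (j + 1) (2 * n - (j + 1))),
      key_sum]
    ring
  · -- upper bound for all instances
    intro I I'
    have hmem : (∑ a : Fin (2 * n), ∑ i : Fin (2 * n - 1),
        Nat.dist (I.MA a i) (I'.MA a i)) ∈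
        { d | ∃ σ : Fin (2 * n) ≃ Fin (2 * n),
          d = ∑ a : Fin (2 * n), ∑ i : Fin (2 * n - 1),
            Nat.dist (I.MA a i) (I'.MA (σ a) i) } := ⟨Equiv.refl _, rfl⟩
    refine le_trans (Nat.sInf_le hmem) ?_
    have hstep1 : (∑ a : Fin (2 * n), ∑ i : Fin (2 * n - 1),
        Nat.dist (I.MA a i) (I'.MA a i))
        = ∑ t ∈ Finset.range (2 * n - 1),
            ((Finset.univ.filter fun p : Fin (2 * n) × Fin (2 * n - 1) =>
              ¬(t < I.MA p.1 p.2 ↔ t < I'.MA p.1 p.2)).card) := by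
      have h0 : (∑ a : Fin (2 * n), ∑ i : Fin (2 * n - 1),
          Nat.dist (I.MA a i) (I'.MA a i))
          = ∑ p : Fin (2 * n) × Fin (2 * n - 1),
              Nat.dist (I.MA p.1 p.2) (I'.MA p.1 p.2) :=
        (Fintype.sum_prod_type (f := fun p : Fin (2 * n) × Fin (2 * n - 1) =>
          Nat.dist (I.MA p.1 p.2) (I'.MA p.1 p.2))).symm
      rw [h0]
      have h1 : ∀ p : Fin (2 * n) × Fin (2 * n - 1),
          Nat.dist (I.MA p.1 p.2) (I'.MA p.1 p.2)
          = ∑ t ∈ Finset.range (2 * n - 1),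
              (if ¬(t < I.MA p.1 p.2 ↔ t < I'.MA p.1 p.2) then 1 else 0) := by
        intro p
        exact dist_layer _ _ _ (I.MA_le p.1 p.2) (I'.MA_le p.1 p.2)
      rw [Finset.sum_congr rfl (fun p _ => h1 p), Finset.sum_comm]
      exact Finset.sum_congr rfl (fun t _ => (Finset.card_filter _ _).symm)
    rw [hstep1]
    have hstep2 : ∀ t ∈ Finset.range (2 * n - 1),
        ((Finset.univ.filter fun p : Fin (2 * n) × Fin (2 * n - 1) =>
            ¬(t < I.MA p.1 p.2 ↔ t < I'.MA p.1 p.2)).card)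
        ≤ 4 * n * min (2 * n - 1 - t) t := by
      intro t ht
      simp only [Finset.mem_range] at ht
      have hcard : ((Finset.univ.filter fun p : Fin (2 * n) × Fin (2 * n - 1) =>
            ¬(t < I.MA p.1 p.2 ↔ t < I'.MA p.1 p.2)).card)
          ≤ 2 * min ((Finset.univ.filter fun p : Fin (2 * n) × Fin (2 * n - 1) =>
              t < I.MA p.1 p.2).card)
            (Fintype.card (Fin (2 * n) × Fin (2 * n - 1))
              - (Finset.univ.filter fun p : Fin (2 * n) × Fin (2 * n - 1) =>
                  t < I.MA p.1 p.2).card) :=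
        card_ne_le (fun p : Fin (2 * n) × Fin (2 * n - 1) => t < I.MA p.1 p.2)
          (fun p : Fin (2 * n) × Fin (2 * n - 1) => t < I'.MA p.1 p.2)
          (by rw [I.card_MA_count t, I'.card_MA_count t])
      refine le_trans hcard ?_
      rw [I.card_MA_count t]
      have hM : Fintype.card (Fin (2 * n) × Fin (2 * n - 1)) = 2 * n * (2 * n - 1) := by
        simp
      rw [hM]
      have e1 : 2 * n * (2 * n - 1) - 2 * n * (2 * n - 1 - t) = 2 * n * t := by
        have h3 : 2 * n * (2 * n - 1 - t) + 2 * n * t = 2 * n * (2 * n - 1) := by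
          rw [← Nat.mul_add]
          congr 1
          omega
        omega
      rw [e1]
      have e2 : min (2 * n * (2 * n - 1 - t)) (2 * n * t)
          = 2 * n * min (2 * n - 1 - t) t := by
        rcases le_total (2 * n - 1 - t) t with h | h
        · rw [min_eq_left (Nat.mul_le_mul_left _ h), min_eq_left h]
        · rw [min_eq_right (Nat.mul_le_mul_left _ h), min_eq_right h]
      rw [e2]
      exact le_of_eq (by ring)
    refine le_trans (Finset.sum_le_sum hstep2) ?_
    rw [← Finset.mul_sum, min_sum]
    refine le_of_eq ?_
    rcases Nat.eq_zero_or_pos n with rfl | hn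
    · simp
    · obtain ⟨m, rfl⟩ : ∃ m, n = m + 1 := ⟨n - 1, by omega⟩
      simp only [Nat.add_sub_cancel]
      ring
end

section
/- The mutual attraction distance between the identity matrix ID^{2n} and the mutual agreement matrix MA^{2n} equals (8/3)n³ − 4n² + (4/3)n. -/
lemma aux_inner (m i : ℕ) (h : i ≤ m) :
    2 * ∑ j ∈ Finset.range m, (if i ≤ j then j - i else i - 1 - j)
      = i * (i - 1) + (m - i) * (m - i - 1) := by
  rw [Finset.range_eq_Ico, ← Finset.sum_Ico_consecutive _ (Nat.zero_le i) h]
  have h1 : ∑ j ∈ Finset.Ico 0 i, (if i ≤ j then j - i else i - 1 - j)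
      = ∑ j ∈ Finset.range i, (i - 1 - j) := by
    rw [← Finset.range_eq_Ico]
    refine Finset.sum_congr rfl fun j hj => ?_
    rw [Finset.mem_range] at hj
    rw [if_neg (by omega)]
  have h2 : ∑ j ∈ Finset.Ico i m, (if i ≤ j then j - i else i - 1 - j)
      = ∑ j ∈ Finset.range (m - i), j := by
    rw [Finset.sum_Ico_eq_sum_range]
    refine Finset.sum_congr rfl fun j hj => ?_
    rw [if_pos (by omega)]
    omega
  rw [h1, h2, Finset.sum_range_reflect (fun j => j) i]
  have g1 := Finset.sum_range_id_mul_two i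
  have g2 := Finset.sum_range_id_mul_two (m - i)
  omega

lemma aux_cube (m : ℕ) :
    3 * ∑ i ∈ Finset.range m, i * (i - 1) = m * (m - 1) * (m - 2) := by
  induction m with
  | zero => simp
  | succ k ih =>
    rw [Finset.sum_range_succ, Nat.mul_add, ih]
    rcases k with _ | _ | k
    · simp
    · simp
    · have e1 : k + 1 + 1 + 1 - 1 = k + 2 := by omega
      have e2 : k + 1 + 1 + 1 - 2 = k + 1 := by omega
      have e3 : k + 1 + 1 - 1 = k + 1 := by omega
      have e4 : k + 1 + 1 - 2 = k := by omega
      rw [e1, e2, e3, e4]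
      ring

/-- The mutual attraction distance between `ID^{2n}` and `MA^{2n}` equals
`(8/3)n³ − 4n² + (4/3)n` (stated multiplied by 3 to stay in `ℕ`). -/
theorem matDist_ID_MA (n : ℕ) :
    3 * matDist (IDmat n) (MAmat n) + 12 * n ^ 2 = 8 * n ^ 3 + 4 * n := by
  have hset : { d | ∃ σ : Fin (2*n) ≃ Fin (2*n),
      d = ∑ i : Fin (2*n), ∑ j : Fin (2*n-1), Nat.dist (IDmat n i j) (MAmat n (σ i) j) }
      = {∑ i : Fin (2*n), ∑ j : Fin (2*n-1), Nat.dist (IDmat n i j) (MAmat n i j)} := by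
    ext d
    simp only [Set.mem_setOf_eq, Set.mem_singleton_iff]
    constructor
    · rintro ⟨σ, rfl⟩; rfl
    · intro h; exact ⟨Equiv.refl _, h⟩
  have hS : matDist (IDmat n) (MAmat n)
      = ∑ i : Fin (2*n), ∑ j : Fin (2*n-1), Nat.dist (IDmat n i j) (MAmat n i j) := by
    unfold matDist
    rw [hset, csInf_singleton]
  have hS2 : matDist (IDmat n) (MAmat n)
      = ∑ i ∈ Finset.range (2*n), ∑ j ∈ Finset.range (2*n-1),
          (if i ≤ j then j - i else i - 1 - j) := by
    rw [hS]
    simp only [IDmat, MAmat]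
    rw [Fin.sum_univ_eq_sum_range (fun i => ∑ j : Fin (2*n-1),
      Nat.dist (if i ≤ j.1 then i + 1 else i) (j.1 + 1))]
    refine Finset.sum_congr rfl fun i _ => ?_
    rw [Fin.sum_univ_eq_sum_range (fun j =>
      Nat.dist (if i ≤ j then i + 1 else i) (j + 1))]
    refine Finset.sum_congr rfl fun j _ => ?_
    split_ifs with hij <;> simp [Nat.dist] <;> omega
  set S := matDist (IDmat n) (MAmat n) with hSdef
  have h2S : 2 * S = 2 * ∑ i ∈ Finset.range (2*n), i * (i - 1) := by
    rw [hS2, Finset.mul_sum]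
    have : ∀ i ∈ Finset.range (2*n),
        2 * ∑ j ∈ Finset.range (2*n-1), (if i ≤ j then j - i else i - 1 - j)
          = i * (i - 1) + (2*n - 1 - i) * (2*n - 1 - i - 1) := by
      intro i hi
      rw [Finset.mem_range] at hi
      exact aux_inner (2*n-1) i (by omega)
    rw [Finset.sum_congr rfl this, Finset.sum_add_distrib]
    rw [Finset.sum_range_reflect (fun i => i * (i - 1)) (2*n)]
    ring
  have h3S : 3 * S = 2*n * (2*n - 1) * (2*n - 2) := by
    have := aux_cube (2*n)
    omega
  rcases n with _ | k
  · simp at h3S ⊢; omega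
  · have e1 : 2*(k+1) - 1 = 2*k + 1 := by omega
    have e2 : 2*(k+1) - 2 = 2*k := by omega
    rw [e1, e2] at h3S
    rw [h3S]
    ring
end

section
/- The mutual attraction distance between the identity matrix ID^{2n} and the mutual disagreement matrix MD^{2n} equals (8/3)n³ − 2n² − (2/3)n. -/
open Finset


lemma G2 (m : ℕ) : 2 * ∑ j ∈ range (m+1), j = m * (m+1) := by
  induction m with
  | zero => simp
  | succ k ih => rw [sum_range_succ, Nat.mul_add, ih]; ring

lemma H6 (m : ℕ) : 6 * ∑ k ∈ range (m+1), (∑ j ∈ range (k+1), j) = m * (m+1) * (m+2) := by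
  induction m with
  | zero => simp
  | succ k ih =>
    rw [sum_range_succ, Nat.mul_add, ih]
    nlinarith [G2 (k+1)]

lemma sum_dist (c t : ℕ) :
    ∑ v ∈ range (c + t + 1), Nat.dist v c
      = (∑ v ∈ range (c + 1), v) + ∑ v ∈ range (t + 1), v := by
  induction t with
  | zero =>
    have h1 : ∑ v ∈ range (c + 0 + 1), Nat.dist v c = ∑ v ∈ range (c+1), (c - v) := by
      refine sum_congr (by ring_nf) fun v hv => ?_
      simp only [mem_range] at hv
      simp [Nat.dist]; omega
    have h2 := Finset.sum_range_reflect (fun x => x) (c+1)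
    have h3 : ∑ j ∈ range (c+1), (c + 1 - 1 - j) = ∑ j ∈ range (c+1), (c - j) :=
      sum_congr rfl fun v _ => by omega
    rw [h1, ← h3, h2]
    simp
  | succ k ih =>
    have h : c + (k+1) + 1 = (c + k + 1) + 1 := by ring
    rw [h, sum_range_succ, ih, sum_range_succ (fun v => v) (k+1)]
    have hd : Nat.dist (c + k + 1) c = k + 1 := by simp [Nat.dist]; omega
    omega

lemma col (t c : ℕ) :
    c + ∑ i ∈ range (t + c + 1), Nat.dist (if i ≤ t then i + 1 else i) c
      = Nat.dist (t + 1) c + (∑ v ∈ range (c + 1), v) + ∑ v ∈ range (t + 1), v := by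
  rcases Nat.eq_zero_or_pos c with rfl | hc
  · simp only [Nat.add_zero, Nat.zero_add, Nat.dist_zero_right]
    have h1 : ∑ i ∈ range (t + 1), Nat.dist (if i ≤ t then i + 1 else i) 0
        = ∑ i ∈ range (t + 1), (i + 1) := by
      refine sum_congr rfl fun i hi => ?_
      simp only [mem_range] at hi
      rw [if_pos (by omega)]
      simp [Nat.dist]
    have h2 : (∑ x ∈ range (t + 1), if x ≤ t then x + 1 else x)
        = ∑ i ∈ range (t + 1), (i + 1) := by
      refine sum_congr rfl fun i hi => ?_
      simp only [mem_range] at hi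
      rw [if_pos (by omega)]
    rw [h2, sum_add_distrib, sum_const, card_range]
    simp
    omega
  · -- split range at t+1
    have hsplit : ∑ i ∈ range (t + c + 1), Nat.dist (if i ≤ t then i + 1 else i) c
        = (∑ i ∈ range (t+1), Nat.dist (i+1) c)
          + ∑ i ∈ Ico (t+1) (t+c+1), Nat.dist i c := by
      rw [range_eq_Ico, ← Finset.sum_Ico_consecutive _ (Nat.zero_le (t+1)) (by omega),
        ← range_eq_Ico]
      congr 1
      · refine sum_congr rfl fun i hi => ?_
        simp only [mem_range] at hi
        rw [if_pos (by omega)]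
      · refine sum_congr rfl fun i hi => ?_
        simp only [mem_Ico] at hi
        rw [if_neg (by omega)]
    have hbot : ∑ i ∈ Ico (t+1) (t+c+1), Nat.dist i c
        = Nat.dist (t+1) c + ∑ i ∈ Ico (t+2) (t+c+1), Nat.dist i c :=
      Finset.sum_eq_sum_Ico_succ_bot (by omega) _
    have hshift : ∑ i ∈ range (t+1), Nat.dist (i+1) c
        = ∑ i ∈ Ico 1 (t+2), Nat.dist i c := by
      have h := Finset.sum_Ico_eq_sum_range (fun i => Nat.dist i c) 1 (t+2)
      simp only [show t + 2 - 1 = t + 1 from rfl] at h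
      rw [h]
      exact sum_congr rfl fun i _ => by rw [Nat.add_comm 1 i]
    have hglue : (∑ i ∈ Ico 1 (t+2), Nat.dist i c)
        + ∑ i ∈ Ico (t+2) (t+c+1), Nat.dist i c
        = ∑ i ∈ Ico 1 (t+c+1), Nat.dist i c :=
      Finset.sum_Ico_consecutive _ (by omega) (by omega)
    have hfull : ∑ i ∈ range (t+c+1), Nat.dist i c
        = Nat.dist 0 c + ∑ i ∈ Ico 1 (t+c+1), Nat.dist i c := by
      rw [range_eq_Ico]
      exact Finset.sum_eq_sum_Ico_succ_bot (by omega) _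
    have hsd : ∑ v ∈ range (c + t + 1), Nat.dist v c
      = (∑ v ∈ range (c + 1), v) + ∑ v ∈ range (t + 1), v := sum_dist c t
    have hct : c + t + 1 = t + c + 1 := by ring
    rw [hct] at hsd
    have : Nat.dist 0 c = c := by simp [Nat.dist]
    omega

lemma matDist_eq (n : ℕ) :
    matDist (IDmat n) (MDmat n)
      = ∑ i : Fin (2*n), ∑ j : Fin (2*n-1), Nat.dist (IDmat n i j) (MDmat n i j) := by
  have h : {d | ∃ σ : Fin (2*n) ≃ Fin (2*n),
      d = ∑ i : Fin (2*n), ∑ j : Fin (2*n-1), Nat.dist (IDmat n i j) (MDmat n (σ i) j)}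
      = {∑ i : Fin (2*n), ∑ j : Fin (2*n-1), Nat.dist (IDmat n i j) (MDmat n i j)} := by
    ext d
    simp only [Set.mem_setOf_eq, Set.mem_singleton_iff, MDmat]
    constructor
    · rintro ⟨σ, rfl⟩; rfl
    · rintro rfl; exact ⟨Equiv.refl _, rfl⟩
  rw [matDist, h, csInf_singleton]

lemma S_eq (n : ℕ) :
    (∑ i : Fin (2*n), ∑ j : Fin (2*n-1), Nat.dist (IDmat n i j) (MDmat n i j))
      = ∑ j ∈ range (2*n-1), ∑ i ∈ range (2*n),
          Nat.dist (if i ≤ j then i + 1 else i) (2*n - (j+1)) := by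
  rw [Finset.sum_comm]
  simp only [IDmat, MDmat]
  rw [Fin.sum_univ_eq_sum_range (fun j => ∑ i : Fin (2*n),
    Nat.dist (if (i:ℕ) ≤ j then (i:ℕ) + 1 else (i:ℕ)) (2*n - (j+1)))]
  refine sum_congr rfl fun j _ => ?_
  rw [Fin.sum_univ_eq_sum_range (fun i =>
    Nat.dist (if i ≤ j then i + 1 else i) (2*n - (j+1)))]

lemma main_calc (p : ℕ) :
    3 * (∑ j ∈ range (2*(p+1)-1), ∑ i ∈ range (2*(p+1)),
          Nat.dist (if i ≤ j then i + 1 else i) (2*(p+1) - (j+1)))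
      + 6 * (p+1) ^ 2 + 2 * (p+1) = 8 * (p+1) ^ 3 := by
  set S := ∑ j ∈ range (2*(p+1)-1), ∑ i ∈ range (2*(p+1)),
      Nat.dist (if i ≤ j then i + 1 else i) (2*(p+1) - (j+1)) with hSdef
  have hr : 2*(p+1)-1 = 2*p+1 := by omega
  have hS : ∑ j ∈ range (2*p+1),
        ((2*p+1-j) + ∑ i ∈ range (2*(p+1)),
          Nat.dist (if i ≤ j then i + 1 else i) (2*(p+1) - (j+1)))
      = ∑ j ∈ range (2*p+1),
        (Nat.dist (j+1) (2*p+1-j) + ((∑ v ∈ range ((2*p+1-j)+1), v)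
          + ∑ v ∈ range (j+1), v)) := by
    refine sum_congr rfl fun j hj => ?_
    simp only [mem_range] at hj
    have e1 : 2*(p+1) - (j+1) = 2*p+1-j := by omega
    have e2 : j + (2*p+1-j) + 1 = 2*(p+1) := by omega
    rw [e1, ← e2, col j (2*p+1-j)]
    ring
  rw [sum_add_distrib, sum_add_distrib, sum_add_distrib] at hS
  set A := ∑ j ∈ range (2*p+1), (2*p+1-j) with hAdef
  set B := ∑ j ∈ range (2*p+1), Nat.dist (j+1) (2*p+1-j) with hBdef
  set C := ∑ j ∈ range (2*p+1), ∑ v ∈ range ((2*p+1-j)+1), v with hCdef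
  set D := ∑ j ∈ range (2*p+1), ∑ v ∈ range (j+1), v with hDdef
  have hSS : A + S = B + (C + D) := by rw [hSdef, hr]; exact hS
  -- A
  have hA : 2 * A = 2*p*(2*p+1) + 2*(2*p+1) := by
    have h1 : A = ∑ j ∈ range (2*p+1), (j+1) := by
      rw [hAdef, ← Finset.sum_range_reflect (fun j => j+1) (2*p+1)]
      exact sum_congr rfl fun j hj => by simp only [mem_range] at hj; omega
    rw [h1, sum_add_distrib, sum_const, card_range, Nat.mul_add,
      show 2*p+1 = (2*p)+1 from rfl, G2 (2*p)]
    ring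
  -- B
  have hB : B + 2*(p+1) = 2*((∑ v ∈ range (p+2), v) + ∑ v ∈ range (p+1), v) := by
    have h1 : B = 2 * ∑ j ∈ range (2*p+1), Nat.dist (j+1) (p+1) := by
      rw [hBdef, Finset.mul_sum]
      refine sum_congr rfl fun j hj => ?_
      simp only [mem_range] at hj
      simp only [Nat.dist]; omega
    have h2 := Finset.sum_range_succ' (fun v => Nat.dist v (p+1)) (2*p+1)
    have h3 := sum_dist (p+1) p
    have h4 : (p+1) + p + 1 = 2*p+1+1 := by ring
    have h4' : p + 1 + 1 = p + 2 := rfl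
    rw [h4, h4'] at h3
    have h5 : Nat.dist 0 (p+1) = p+1 := by simp [Nat.dist]
    rw [h1]
    omega
  -- C
  have hC : 6 * C = (2*p+1)*(2*p+2)*(2*p+3) := by
    have h1 : C = ∑ j ∈ range (2*p+1), ∑ v ∈ range (j+2), v := by
      rw [hCdef, ← Finset.sum_range_reflect (fun j => ∑ v ∈ range (j+2), v) (2*p+1)]
      refine sum_congr rfl fun j hj => ?_
      simp only [mem_range] at hj
      have e : 2*p+1-j+1 = 2*p+1-1-j+2 := by omega
      rw [e]
    have h2 := Finset.sum_range_succ' (fun k => ∑ v ∈ range (k+1), v) (2*p+1)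
    simp only [show ∀ k:ℕ, k+1+1 = k+2 from fun _ => rfl] at h2
    have h4 : ∑ v ∈ range (0+1), v = 0 := by simp
    have h6 : C = ∑ k ∈ range (2*p+2), ∑ v ∈ range (k+1), v := by
      rw [h1]; omega
    rw [h6]
    exact H6 (2*p+1)
  -- D
  have hD : 6 * D = 2*p*(2*p+1)*(2*p+2) := by
    rw [hDdef]
    exact H6 (2*p)
  nlinarith [hSS, hA, hB, hC, hD, G2 (p+1), G2 p]

/-- The mutual attraction distance between `ID^{2n}` and `MD^{2n}` equals
`(8/3)n³ − 2n² − (2/3)n` (stated multiplied by 3 to stay in `ℕ`). -/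
theorem matDist_ID_MD (n : ℕ) :
    3 * matDist (IDmat n) (MDmat n) + 6 * n ^ 2 + 2 * n = 8 * n ^ 3 := by
  rcases n with _ | p
  · rw [matDist_eq]
    simp
  · rw [matDist_eq, S_eq]
    exact main_calc p
end

section
/- The asymptotic normalized mutual attraction distances satisfy: lim_{n→∞} dist(MA^{2n}, MD^{2n})/(4(n−1)n²) = 1, and for each pair {X,Y} among {ID, MA, MD, CH} other than {MA, MD}, lim_{n→∞} dist(X^{2n}, Y^{2n})/(4(n−1)n²) = 2/3, given the exact formulas dist(ID,MA)=dist(MA,CH)=(8/3)n³−4n²+(4/3)n, dist(ID,MD)=dist(MD,CH)=(8/3)n³−2n²−(2/3)n, dist(MA,MD)=4(n−1)n², and dist(ID,CH)=(8/3)n³+O(n²). -/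
/-- The chaos matrix `CH^{2n}`: the first row is `(1, …, 2n-1)` and (with
1-indexed rows `i ≥ 2` and columns `j`) entry `(i,j)` is the representative in
`[1, 2n-1]` of `i + nj − n − 1 (mod 2n−1)`. -/
def CHmat (n : ℕ) : Fin (2 * n) → Fin (2 * n - 1) → ℕ := fun i j =>
  if i.1 = 0 then j.1 + 1
  else ((i.1 + 1) + n * (j.1 + 1) - n - 2) % (2 * n - 1) + 1


open Finset Filter

lemma sum_id_z (N : ℕ) : 2 * ∑ i ∈ range N, (i:ℤ) = N * (N-1) := by
  induction N with
  | zero => simp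
  | succ k ih => rw [Finset.sum_range_succ]; push_cast; push_cast at ih; linarith

lemma sum_sq_z (N : ℕ) : 6 * ∑ i ∈ range N, (i:ℤ)^2 = N * (N-1) * (2*N-1) := by
  induction N with
  | zero => simp
  | succ k ih => rw [Finset.sum_range_succ]; push_cast; push_cast at ih; linarith

lemma dist_base (c : ℕ) : 2 * ∑ j ∈ range c, Nat.dist j c = c * (c+1) := by
  induction c with
  | zero => simp
  | succ k ih =>
    rw [Finset.sum_range_succ]
    have h1 : ∀ j ∈ range k, Nat.dist j (k+1) = Nat.dist j k + 1 := by
      intro j hj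
      simp only [Finset.mem_range] at hj
      simp [Nat.dist]; omega
    rw [Finset.sum_congr rfl h1, Finset.sum_add_distrib, Finset.sum_const, smul_eq_mul,
      mul_one, Finset.card_range]
    have h2 : Nat.dist k (k+1) = 1 := by simp [Nat.dist]
    rw [h2]
    zify at ih ⊢
    ring_nf at ih ⊢
    linarith

lemma dist_sum (c m : ℕ) (h : c ≤ m) :
    2 * ∑ j ∈ range m, (Nat.dist j c : ℤ) = c * (c+1) + (m-c) * (m-c-1) := by
  induction m, h using Nat.le_induction with
  | base =>
    have h0 : ((2 * ∑ j ∈ range c, Nat.dist j c : ℕ) : ℤ) = ((c*(c+1) : ℕ) : ℤ) := by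
      rw [dist_base]
    push_cast at h0
    push_cast
    linarith
  | succ k hk ih =>
    rw [Finset.sum_range_succ]
    have hd : (Nat.dist k c : ℤ) = (k:ℤ) - c := by
      simp [Nat.dist]; omega
    push_cast
    push_cast at ih
    rw [hd]
    ring_nf
    ring_nf at ih
    linarith

lemma matDist_const_right {R C : ℕ} (M M' : Fin R → Fin C → ℕ)
    (h : ∀ i i' j, M' i j = M' i' j) :
    matDist M M' = ∑ i : Fin R, ∑ j : Fin C, Nat.dist (M i j) (M' i j) := by
  unfold matDist
  have hset : { d | ∃ σ : Fin R ≃ Fin R,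
      d = ∑ i : Fin R, ∑ j : Fin C, Nat.dist (M i j) (M' (σ i) j) } =
      {∑ i : Fin R, ∑ j : Fin C, Nat.dist (M i j) (M' i j)} := by
    ext d
    simp only [Set.mem_setOf_eq, Set.mem_singleton_iff]
    constructor
    · rintro ⟨σ, rfl⟩
      refine Finset.sum_congr rfl fun i _ => Finset.sum_congr rfl fun j _ => ?_
      rw [h (σ i) i j]
    · rintro rfl
      exact ⟨Equiv.refl _, rfl⟩
  rw [hset, csInf_singleton]

lemma matDist_const_left {R C : ℕ} (M M' : Fin R → Fin C → ℕ)
    (h : ∀ i i' j, M i j = M i' j) :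
    matDist M M' = ∑ i : Fin R, ∑ j : Fin C, Nat.dist (M i j) (M' i j) := by
  unfold matDist
  have hset : { d | ∃ σ : Fin R ≃ Fin R,
      d = ∑ i : Fin R, ∑ j : Fin C, Nat.dist (M i j) (M' (σ i) j) } =
      {∑ i : Fin R, ∑ j : Fin C, Nat.dist (M i j) (M' i j)} := by
    ext d
    simp only [Set.mem_setOf_eq, Set.mem_singleton_iff]
    constructor
    · rintro ⟨σ, rfl⟩
      rw [← Equiv.sum_comp σ (fun i => ∑ j : Fin C, Nat.dist (M i j) (M' i j))]
      refine Finset.sum_congr rfl fun i _ => Finset.sum_congr rfl fun j _ => ?_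
      rw [h i (σ i) j]
    · rintro rfl
      exact ⟨Equiv.refl _, rfl⟩
  rw [hset, csInf_singleton]

/-- summing f ((t+c) % m) over t < m equals summing f over range m -/
lemma shift_sum (m c : ℕ) (f : ℕ → ℕ) :
    ∑ t ∈ range m, f ((t + c) % m) = ∑ k ∈ range m, f k := by
  rcases Nat.eq_zero_or_pos m with hm | hm
  · simp [hm]
  have hinj : Set.InjOn (fun t => (t + c) % m) (range m) := by
    intro a ha b hb hab
    simp only [Finset.coe_range, Set.mem_Iio] at ha hb
    simp only at hab
    have : a % m = b % m := Nat.ModEq.add_right_cancel' c hab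
    rwa [Nat.mod_eq_of_lt ha, Nat.mod_eq_of_lt hb] at this
  have himg : Finset.image (fun t => (t + c) % m) (range m) = range m := by
    apply Finset.eq_of_subset_of_card_le
    · intro x hx
      simp only [Finset.mem_image, Finset.mem_range] at hx ⊢
      obtain ⟨t, _, rfl⟩ := hx
      exact Nat.mod_lt _ hm
    · rw [Finset.card_image_of_injOn hinj]
  conv_rhs => rw [← himg]
  rw [Finset.sum_image (fun a ha b hb hab => hinj (by simpa using ha) (by simpa using hb) hab)]

/-- summing f ((c + n*t) % m) over t < m, where m = 2n-1, equals summing f over range m -/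
lemma mul_shift_sum (n c : ℕ) (hn : 1 ≤ n) (f : ℕ → ℕ) :
    ∑ t ∈ range (2*n-1), f ((c + n * t) % (2*n-1)) = ∑ k ∈ range (2*n-1), f k := by
  set m := 2*n-1 with hm
  have hm1 : 1 ≤ m := by omega
  have hinj : Set.InjOn (fun t => (c + n * t) % m) (range m) := by
    intro a ha b hb hab
    simp only [Finset.coe_range, Set.mem_Iio] at ha hb
    simp only at hab
    have h1 : n * a ≡ n * b [MOD m] := (Nat.ModEq.add_left_cancel' c hab)
    have h2 : 2 * (n * a) ≡ 2 * (n * b) [MOD m] := h1.mul_left 2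
    have h3 : (m+1) * a ≡ (m+1) * b [MOD m] := by
      have h2n : m + 1 = 2 * n := by omega
      have e : ∀ x : ℕ, 2 * (n * x) = (m+1) * x := by
        intro x
        rw [h2n]
        ring
      rwa [e a, e b] at h2
    have h4 : a ≡ b [MOD m] := by
      have ea : (m+1) * a ≡ a [MOD m] := by
        unfold Nat.ModEq
        conv_lhs => rw [show (m+1)*a = a + a*m by ring, Nat.add_mul_mod_self_right]
      have eb : (m+1) * b ≡ b [MOD m] := by
        unfold Nat.ModEq
        conv_lhs => rw [show (m+1)*b = b + b*m by ring, Nat.add_mul_mod_self_right]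
      exact ea.symm.trans (h3.trans eb)
    unfold Nat.ModEq at h4
    rwa [Nat.mod_eq_of_lt ha, Nat.mod_eq_of_lt hb] at h4
  have himg : Finset.image (fun t => (c + n * t) % m) (range m) = range m := by
    apply Finset.eq_of_subset_of_card_le
    · intro x hx
      simp only [Finset.mem_image, Finset.mem_range] at hx ⊢
      obtain ⟨t, _, rfl⟩ := hx
      exact Nat.mod_lt _ hm1
    · rw [Finset.card_image_of_injOn hinj]
  conv_rhs => rw [← himg]
  rw [Finset.sum_image (fun a ha b hb hab => hinj (by simpa using ha) (by simpa using hb) hab)]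

lemma col_ID (n j : ℕ) (hj : j < 2*n-1) (g : ℕ → ℕ) :
    ∑ i ∈ range (2*n), g (if i ≤ j then i+1 else i)
      = g (j+1) + ∑ k ∈ range (2*n-1), g (k+1) := by
  have h1 : j+1 ≤ 2*n := by omega
  rw [← Finset.sum_range_add_sum_Ico _ h1]
  have e1 : ∑ i ∈ range (j+1), g (if i ≤ j then i+1 else i)
      = (∑ i ∈ range j, g (i+1)) + g (j+1) := by
    rw [Finset.sum_congr rfl (fun i hi => by
      rw [if_pos (by simp only [Finset.mem_range] at hi; omega)]), Finset.sum_range_succ]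
  have e2 : ∑ i ∈ Ico (j+1) (2*n), g (if i ≤ j then i+1 else i)
      = ∑ i ∈ Ico (j+1) (2*n), g i :=
    Finset.sum_congr rfl (fun i hi => by
      rw [if_neg (by simp only [Finset.mem_Ico] at hi; omega)])
  rw [e1, e2]
  have e3 : ∑ k ∈ range (2*n-1), g (k+1)
      = (∑ k ∈ range j, g (k+1)) + ∑ k ∈ Ico j (2*n-1), g (k+1) :=
    (Finset.sum_range_add_sum_Ico _ (by omega)).symm
  rw [e3]
  have e4 : ∑ i ∈ Ico (j+1) (2*n), g i = ∑ k ∈ Ico j (2*n-1), g (k+1) := by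
    rw [Finset.sum_Ico_eq_sum_range, Finset.sum_Ico_eq_sum_range]
    have h5 : 2*n - (j+1) = 2*n-1 - j := by omega
    rw [h5]
    exact Finset.sum_congr rfl (fun t _ => by congr 1; omega)
  rw [e4]
  omega

/-- each row of CH is a permutation of 1..2n-1 -/
lemma CH_row_sum (n : ℕ) (hn : 1 ≤ n) (i : Fin (2*n)) (f : ℕ → ℕ) :
    ∑ j : Fin (2*n-1), f (CHmat n i j) = ∑ k ∈ range (2*n-1), f (k+1) := by
  rcases Nat.eq_zero_or_pos i.1 with h0 | hpos
  · simp only [CHmat, h0, if_pos]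
    exact Fin.sum_univ_eq_sum_range (fun k => f (k+1)) (2*n-1)
  · obtain ⟨t, ht⟩ : ∃ t, i.1 = t + 1 := ⟨i.1 - 1, by omega⟩
    have hval : ∀ j : Fin (2*n-1), CHmat n i j = (t + n * j.1) % (2*n-1) + 1 := by
      intro j
      simp only [CHmat, ht]
      rw [if_neg (by omega)]
      congr 2
      rw [Nat.mul_succ]
      omega
    rw [Finset.sum_congr rfl (fun j _ => by rw [hval j])]
    rw [Fin.sum_univ_eq_sum_range (fun k => f ((t + n * k) % (2*n-1) + 1)) (2*n-1)]
    exact mul_shift_sum n t hn (fun v => f (v+1))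

def En (n : ℕ) : ℕ := ∑ j ∈ range (2*n-1), Nat.dist (j+1) (2*n-(j+1))
def Tn (n : ℕ) : ℕ := ∑ j ∈ range (2*n-1), ∑ k ∈ range (2*n-1), Nat.dist j k
def An (n : ℕ) : ℕ := ∑ i ∈ range (2*n), ∑ k ∈ range (2*n-1), Nat.dist i (k+1)

lemma dist_succ_succ' (a b : ℕ) : Nat.dist (a+1) (b+1) = Nat.dist a b := by
  simp [Nat.dist]

lemma S1_eq (n : ℕ) : matDist (MAmat n) (MDmat n) = 2*n * En n := by
  rw [matDist_const_left _ _ (by intro i i' j; rfl)]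
  have inner : ∀ i : Fin (2*n),
      ∑ j : Fin (2*n-1), Nat.dist (MAmat n i j) (MDmat n i j) = En n := by
    intro i
    simp only [MAmat, MDmat]
    exact Fin.sum_univ_eq_sum_range (fun j => Nat.dist (j+1) (2*n-(j+1))) (2*n-1)
  rw [Finset.sum_congr rfl (fun i _ => inner i), Finset.sum_const, Finset.card_univ,
    Fintype.card_fin, smul_eq_mul]

lemma S2_eq (n : ℕ) : matDist (IDmat n) (MAmat n) = Tn n := by
  rw [matDist_const_right _ _ (by intro i i' j; rfl), Finset.sum_comm]
  have h1 : ∀ j : Fin (2*n-1), ∑ i : Fin (2*n), Nat.dist (IDmat n i j) (MAmat n i j)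
      = ∑ k ∈ range (2*n-1), Nat.dist j.1 k := by
    intro j
    have h2 : ∑ i : Fin (2*n), Nat.dist (IDmat n i j) (MAmat n i j)
        = ∑ i ∈ range (2*n), (fun v => Nat.dist v (j.1+1)) (if i ≤ j.1 then i+1 else i) := by
      simp only [IDmat, MAmat]
      exact Fin.sum_univ_eq_sum_range
        (fun i => Nat.dist (if i ≤ j.1 then i+1 else i) (j.1+1)) (2*n)
    rw [h2, col_ID n j.1 j.2 (fun v => Nat.dist v (j.1+1))]
    simp only [Nat.dist_self, zero_add]
    exact Finset.sum_congr rfl (fun k _ => by rw [dist_succ_succ', Nat.dist_comm])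
  rw [Finset.sum_congr rfl (fun j _ => h1 j)]
  exact Fin.sum_univ_eq_sum_range (fun j => ∑ k ∈ range (2*n-1), Nat.dist j k) (2*n-1)

lemma S3_eq (n : ℕ) (hn : 1 ≤ n) : matDist (IDmat n) (MDmat n) = En n + Tn n := by
  rw [matDist_const_right _ _ (by intro i i' j; rfl), Finset.sum_comm]
  have h1 : ∀ j : Fin (2*n-1), ∑ i : Fin (2*n), Nat.dist (IDmat n i j) (MDmat n i j)
      = Nat.dist (j.1+1) (2*n-(j.1+1)) + ∑ k ∈ range (2*n-1), Nat.dist k (2*n-2-j.1) := by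
    intro j
    have h2 : ∑ i : Fin (2*n), Nat.dist (IDmat n i j) (MDmat n i j)
        = ∑ i ∈ range (2*n),
            (fun v => Nat.dist v (2*n-(j.1+1))) (if i ≤ j.1 then i+1 else i) := by
      simp only [IDmat, MDmat]
      exact Fin.sum_univ_eq_sum_range
        (fun i => Nat.dist (if i ≤ j.1 then i+1 else i) (2*n-(j.1+1))) (2*n)
    rw [h2, col_ID n j.1 j.2 (fun v => Nat.dist v (2*n-(j.1+1)))]
    congr 1
    refine Finset.sum_congr rfl (fun k _ => ?_)
    have hj := j.2
    have : 2*n-(j.1+1) = (2*n-2-j.1) + 1 := by omega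
    rw [this, dist_succ_succ']
  rw [Finset.sum_congr rfl (fun j _ => h1 j), Finset.sum_add_distrib]
  congr 1
  · exact Fin.sum_univ_eq_sum_range (fun j => Nat.dist (j+1) (2*n-(j+1))) (2*n-1)
  · rw [Fin.sum_univ_eq_sum_range
      (fun j => ∑ k ∈ range (2*n-1), Nat.dist k (2*n-2-j)) (2*n-1)]
    have hrefl := Finset.sum_range_reflect
      (fun j => ∑ k ∈ range (2*n-1), Nat.dist k j) (2*n-1)
    have heq : ∀ j ∈ range (2*n-1),
        ∑ k ∈ range (2*n-1), Nat.dist k (2*n-2-j)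
          = ∑ k ∈ range (2*n-1), Nat.dist k (2*n-1-1-j) := by
      intro j hj
      simp only [Finset.mem_range] at hj
      refine Finset.sum_congr rfl (fun k _ => ?_)
      have he : 2*n-2-j = 2*n-1-1-j := by omega
      rw [he]
    rw [Finset.sum_congr rfl heq, hrefl]
    exact Finset.sum_congr rfl (fun j _ => Finset.sum_congr rfl
      (fun k _ => Nat.dist_comm k j))

lemma S4_eq (n : ℕ) (hn : 1 ≤ n) : matDist (MAmat n) (CHmat n) = Tn n := by
  rw [matDist_const_left _ _ (by intro i i' j; rfl), Finset.sum_comm]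
  have h1 : ∀ j : Fin (2*n-1), ∑ i : Fin (2*n), Nat.dist (MAmat n i j) (CHmat n i j)
      = ∑ k ∈ range (2*n-1), Nat.dist j.1 k := by
    intro j
    have h2 : ∑ i : Fin (2*n), Nat.dist (MAmat n i j) (CHmat n i j)
        = ∑ i ∈ range (2*n), Nat.dist (j.1+1)
            (if i = 0 then j.1+1 else ((i + 1) + n * (j.1 + 1) - n - 2) % (2*n-1) + 1) := by
      simp only [MAmat, CHmat]
      exact Fin.sum_univ_eq_sum_range (fun i => Nat.dist (j.1+1)
        (if i = 0 then j.1+1 else ((i + 1) + n * (j.1 + 1) - n - 2) % (2*n-1) + 1)) (2*n)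
    rw [h2]
    rw [show range (2*n) = range ((2*n-1)+1) from congrArg range (by omega),
      Finset.sum_range_succ']
    have hval : ∀ t ∈ range (2*n-1), Nat.dist (j.1+1)
        (if t+1 = 0 then j.1+1 else ((t+1 + 1) + n * (j.1 + 1) - n - 2) % (2*n-1) + 1)
        = (fun v => Nat.dist (j.1+1) (v+1)) ((t + n*j.1) % (2*n-1)) := by
      intro t _
      have harg : (t+1+1) + n*(j.1+1) - n - 2 = t + n*j.1 := by rw [Nat.mul_succ]; omega
      rw [if_neg (Nat.succ_ne_zero t), harg]
    rw [Finset.sum_congr rfl hval,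
      shift_sum (2*n-1) (n*j.1) (fun v => Nat.dist (j.1+1) (v+1))]
    simp [dist_succ_succ']
  rw [Finset.sum_congr rfl (fun j _ => h1 j)]
  exact Fin.sum_univ_eq_sum_range (fun j => ∑ k ∈ range (2*n-1), Nat.dist j k) (2*n-1)

lemma S5_eq (n : ℕ) (hn : 1 ≤ n) : matDist (MDmat n) (CHmat n) = En n + Tn n := by
  rw [matDist_const_left _ _ (by intro i i' j; rfl), Finset.sum_comm]
  have h1 : ∀ j : Fin (2*n-1), ∑ i : Fin (2*n), Nat.dist (MDmat n i j) (CHmat n i j)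
      = Nat.dist (j.1+1) (2*n-(j.1+1)) + ∑ k ∈ range (2*n-1), Nat.dist (2*n-2-j.1) k := by
    intro j
    have h2 : ∑ i : Fin (2*n), Nat.dist (MDmat n i j) (CHmat n i j)
        = ∑ i ∈ range (2*n), Nat.dist (2*n-(j.1+1))
            (if i = 0 then j.1+1 else ((i + 1) + n * (j.1 + 1) - n - 2) % (2*n-1) + 1) := by
      simp only [MDmat, CHmat]
      exact Fin.sum_univ_eq_sum_range (fun i => Nat.dist (2*n-(j.1+1))
        (if i = 0 then j.1+1 else ((i + 1) + n * (j.1 + 1) - n - 2) % (2*n-1) + 1)) (2*n)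
    rw [h2]
    rw [show range (2*n) = range ((2*n-1)+1) from congrArg range (by omega),
      Finset.sum_range_succ']
    have hval : ∀ t ∈ range (2*n-1), Nat.dist (2*n-(j.1+1))
        (if t+1 = 0 then j.1+1 else ((t+1 + 1) + n * (j.1 + 1) - n - 2) % (2*n-1) + 1)
        = (fun v => Nat.dist (2*n-2-j.1) v) ((t + n*j.1) % (2*n-1)) := by
      intro t _
      have harg : (t+1+1) + n*(j.1+1) - n - 2 = t + n*j.1 := by rw [Nat.mul_succ]; omega
      rw [if_neg (Nat.succ_ne_zero t), harg]
      simp only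
      have hj := j.2
      have h3 : 2*n-(j.1+1) = (2*n-2-j.1) + 1 := by omega
      rw [h3, dist_succ_succ']
    rw [Finset.sum_congr rfl hval,
      shift_sum (2*n-1) (n*j.1) (fun v => Nat.dist (2*n-2-j.1) v)]
    simp [Nat.dist_comm, add_comm]
  rw [Finset.sum_congr rfl (fun j _ => h1 j), Finset.sum_add_distrib]
  congr 1
  · exact Fin.sum_univ_eq_sum_range (fun j => Nat.dist (j+1) (2*n-(j+1))) (2*n-1)
  · rw [Fin.sum_univ_eq_sum_range
      (fun j => ∑ k ∈ range (2*n-1), Nat.dist (2*n-2-j) k) (2*n-1)]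
    have hrefl := Finset.sum_range_reflect
      (fun j => ∑ k ∈ range (2*n-1), Nat.dist j k) (2*n-1)
    have heq : ∀ j ∈ range (2*n-1),
        ∑ k ∈ range (2*n-1), Nat.dist (2*n-2-j) k
          = ∑ k ∈ range (2*n-1), Nat.dist (2*n-1-1-j) k := by
      intro j hj
      have he : 2*n-2-j = 2*n-1-1-j := by omega
      rw [he]
    rw [Finset.sum_congr rfl heq, hrefl]
    rfl

lemma S6_bounds (n : ℕ) (hn : 1 ≤ n) :
    matDist (IDmat n) (CHmat n) ≤ An n + 2*n*(2*n-1) ∧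
    An n ≤ matDist (IDmat n) (CHmat n) + 2*n*(2*n-1) := by
  have hA : ∀ σ : Fin (2*n) ≃ Fin (2*n),
      ∑ i : Fin (2*n), ∑ j : Fin (2*n-1), Nat.dist i.1 (CHmat n (σ i) j) = An n := by
    intro σ
    have h1 : ∀ i : Fin (2*n), ∑ j : Fin (2*n-1), Nat.dist i.1 (CHmat n (σ i) j)
        = ∑ k ∈ range (2*n-1), Nat.dist i.1 (k+1) :=
      fun i => CH_row_sum n hn (σ i) (fun v => Nat.dist i.1 v)
    rw [Finset.sum_congr rfl (fun i _ => h1 i)]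
    exact Fin.sum_univ_eq_sum_range (fun i => ∑ k ∈ range (2*n-1), Nat.dist i (k+1)) (2*n)
  have hpt1 : ∀ (i : Fin (2*n)) (j : Fin (2*n-1)) (x : ℕ),
      Nat.dist (IDmat n i j) x ≤ Nat.dist i.1 x + 1 := by
    intro i j x
    simp only [IDmat]
    split_ifs <;> (simp only [Nat.dist]; omega)
  have hpt2 : ∀ (i : Fin (2*n)) (j : Fin (2*n-1)) (x : ℕ),
      Nat.dist i.1 x ≤ Nat.dist (IDmat n i j) x + 1 := by
    intro i j x
    simp only [IDmat]
    split_ifs <;> (simp only [Nat.dist]; omega)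
  have collapse : ∀ (F G : Fin (2*n) → Fin (2*n-1) → ℕ),
      (∀ i j, F i j ≤ G i j + 1) →
      (∑ i : Fin (2*n), ∑ j : Fin (2*n-1), F i j)
        ≤ (∑ i : Fin (2*n), ∑ j : Fin (2*n-1), G i j) + 2*n*(2*n-1) := by
    intro F G h
    have step1 : (∑ i : Fin (2*n), ∑ j : Fin (2*n-1), F i j)
        ≤ ∑ i : Fin (2*n), ∑ j : Fin (2*n-1), (G i j + 1) :=
      Finset.sum_le_sum (fun i _ => Finset.sum_le_sum (fun j _ => h i j))
    have step2 : ∑ i : Fin (2*n), ∑ j : Fin (2*n-1), (G i j + 1)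
        = (∑ i : Fin (2*n), ∑ j : Fin (2*n-1), G i j) + 2*n*(2*n-1) := by
      have hin : ∀ i : Fin (2*n), ∑ j : Fin (2*n-1), (G i j + 1)
          = (∑ j : Fin (2*n-1), G i j) + (2*n-1) := by
        intro i
        rw [Finset.sum_add_distrib, Finset.sum_const, Finset.card_univ,
          Fintype.card_fin, smul_eq_mul, mul_one]
      rw [Finset.sum_congr rfl (fun i _ => hin i), Finset.sum_add_distrib,
        Finset.sum_const, Finset.card_univ, Fintype.card_fin, smul_eq_mul]
    omega
  constructor
  · have hmem : (∑ i : Fin (2*n), ∑ j : Fin (2*n-1),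
        Nat.dist (IDmat n i j) (CHmat n (Equiv.refl _ i) j)) ∈
        { d | ∃ σ : Fin (2*n) ≃ Fin (2*n),
          d = ∑ i : Fin (2*n), ∑ j : Fin (2*n-1),
            Nat.dist (IDmat n i j) (CHmat n (σ i) j) } := ⟨Equiv.refl _, rfl⟩
    refine le_trans (Nat.sInf_le hmem) ?_
    calc (∑ i : Fin (2*n), ∑ j : Fin (2*n-1),
          Nat.dist (IDmat n i j) (CHmat n (Equiv.refl _ i) j))
        ≤ (∑ i : Fin (2*n), ∑ j : Fin (2*n-1),
            Nat.dist i.1 (CHmat n (Equiv.refl _ i) j)) + 2*n*(2*n-1) :=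
          collapse _ _ (fun i j => hpt1 i j _)
      _ = An n + 2*n*(2*n-1) := by rw [hA (Equiv.refl _)]
  · have hne : { d | ∃ σ : Fin (2*n) ≃ Fin (2*n),
        d = ∑ i : Fin (2*n), ∑ j : Fin (2*n-1),
          Nat.dist (IDmat n i j) (CHmat n (σ i) j) }.Nonempty :=
      ⟨_, Equiv.refl _, rfl⟩
    obtain ⟨σ₀, hσ₀⟩ := Nat.sInf_mem hne
    have : matDist (IDmat n) (CHmat n) = ∑ i : Fin (2*n), ∑ j : Fin (2*n-1),
        Nat.dist (IDmat n i j) (CHmat n (σ₀ i) j) := hσ₀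
    rw [this]
    calc An n = ∑ i : Fin (2*n), ∑ j : Fin (2*n-1), Nat.dist i.1 (CHmat n (σ₀ i) j) :=
          (hA σ₀).symm
      _ ≤ (∑ i : Fin (2*n), ∑ j : Fin (2*n-1),
            Nat.dist (IDmat n i j) (CHmat n (σ₀ i) j)) + 2*n*(2*n-1) :=
          collapse _ _ (fun i j => hpt2 i j _)

lemma E_val (n : ℕ) (hn : 1 ≤ n) :
    ∑ j ∈ range (2*n-1), (Nat.dist (j+1) (2*n-(j+1)) : ℤ) = 2*n*(n-1) := by
  have hpt : ∀ j ∈ range (2*n-1), (Nat.dist (j+1) (2*n-(j+1)) : ℤ)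
      = 2 * (Nat.dist j (n-1) : ℤ) := by
    intro j hj
    simp only [Finset.mem_range] at hj
    have : Nat.dist (j+1) (2*n-(j+1)) = 2 * Nat.dist j (n-1) := by
      simp [Nat.dist]; omega
    rw [this]; push_cast; ring
  rw [Finset.sum_congr rfl hpt, ← Finset.mul_sum]
  have h := dist_sum (n-1) (2*n-1) (by omega)
  have hc : ((n-1 : ℕ) : ℤ) = (n : ℤ) - 1 := by omega
  have hm : ((2*n-1 : ℕ) : ℤ) = 2*(n:ℤ) - 1 := by omega
  rw [hc, hm] at h
  linarith

lemma T_val (m : ℕ) :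
    3 * ∑ j ∈ range m, ∑ k ∈ range m, (Nat.dist j k : ℤ) = m^3 - m := by
  have key : ∑ j ∈ range m, (2 * ∑ k ∈ range m, (Nat.dist j k:ℤ))
      = ∑ j ∈ range m, ((j:ℤ)*(j+1)+((m:ℤ)-j)*((m:ℤ)-j-1)) := by
    refine Finset.sum_congr rfl fun j hj => ?_
    simp only [Finset.mem_range] at hj
    have h := dist_sum j m hj.le
    rw [← h]
    congr 1
    exact Finset.sum_congr rfl fun k _ => by rw [Nat.dist_comm]
  have expand : ∑ j ∈ range m, ((j:ℤ)*(j+1)+((m:ℤ)-j)*((m:ℤ)-j-1))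
      = 2*(∑ j ∈ range m, (j:ℤ)^2) + (2-2*m)*(∑ j ∈ range m, (j:ℤ)) + m*((m:ℤ)^2-m) := by
    have : ∀ j ∈ range m, ((j:ℤ)*(j+1)+((m:ℤ)-j)*((m:ℤ)-j-1))
        = 2*(j:ℤ)^2 + (2-2*(m:ℤ))*j + ((m:ℤ)^2-m) := fun j _ => by ring
    rw [Finset.sum_congr rfl this, Finset.sum_add_distrib, Finset.sum_add_distrib,
      ← Finset.mul_sum, ← Finset.mul_sum, Finset.sum_const, Finset.card_range,
      nsmul_eq_mul]
  rw [← Finset.mul_sum] at key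
  have h1 := sum_id_z m
  have h2 := sum_sq_z m
  have h6 : 6 * ∑ j ∈ range m, ∑ k ∈ range m, (Nat.dist j k : ℤ) = 2*((m:ℤ)^3 - m) := by
    linear_combination 3*key + 3*expand + h2 + (3-3*(m:ℤ))*h1
  linarith

lemma A_val (n : ℕ) (hn : 1 ≤ n) :
    6 * ∑ i ∈ range (2*n), ∑ k ∈ range (2*n-1), (Nat.dist i (k+1) : ℤ)
      = 2*n*(2*n-1)*(4*n-1) := by
  have hm : 2*n-1+1 = 2*n := by omega
  have key : ∑ i ∈ range (2*n), (2 * ∑ k ∈ range (2*n-1), (Nat.dist i (k+1):ℤ))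
      = ∑ i ∈ range (2*n), (((i:ℤ)*(i+1)+(2*(n:ℤ)-i)*(2*(n:ℤ)-i-1)) - 2*i) := by
    refine Finset.sum_congr rfl fun i hi => ?_
    simp only [Finset.mem_range] at hi
    have hsplit : ∑ k ∈ range (2*n-1+1), (Nat.dist k i : ℤ)
        = (∑ k ∈ range (2*n-1), (Nat.dist (k+1) i : ℤ)) + (Nat.dist 0 i : ℤ) :=
      Finset.sum_range_succ' _ _
    rw [hm] at hsplit
    have h := dist_sum i (2*n) hi.le
    rw [show ((2*n:ℕ):ℤ) = 2*(n:ℤ) by push_cast; ring] at h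
    have hd0 : (Nat.dist 0 i : ℤ) = i := by simp [Nat.dist]
    have hcomm : ∑ k ∈ range (2*n-1), (Nat.dist i (k+1):ℤ)
        = ∑ k ∈ range (2*n-1), (Nat.dist (k+1) i:ℤ) :=
      Finset.sum_congr rfl fun k _ => by rw [Nat.dist_comm]
    rw [hcomm]
    linarith
  have expand : ∑ i ∈ range (2*n), (((i:ℤ)*(i+1)+(2*(n:ℤ)-i)*(2*(n:ℤ)-i-1)) - 2*i)
      = 2*(∑ i ∈ range (2*n), (i:ℤ)^2) + (-4*(n:ℤ))*(∑ i ∈ range (2*n), (i:ℤ))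
        + 2*(n:ℤ)*(4*(n:ℤ)^2-2*(n:ℤ)) := by
    have hpt : ∀ i ∈ range (2*n), (((i:ℤ)*(i+1)+(2*(n:ℤ)-i)*(2*(n:ℤ)-i-1)) - 2*i)
        = 2*(i:ℤ)^2 + (-4*(n:ℤ))*i + (4*(n:ℤ)^2-2*(n:ℤ)) := fun i _ => by ring
    rw [Finset.sum_congr rfl hpt, Finset.sum_add_distrib, Finset.sum_add_distrib,
      ← Finset.mul_sum, ← Finset.mul_sum, Finset.sum_const, Finset.card_range,
      nsmul_eq_mul]
    push_cast
    ring
  rw [← Finset.mul_sum] at key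
  have h1 := sum_id_z (2*n)
  have h2 := sum_sq_z (2*n)
  rw [show ((2*n:ℕ):ℤ) = 2*(n:ℤ) by push_cast; ring] at h1 h2
  linear_combination 3 * key + 3 * expand + h2 + (-6)*(n:ℤ) * h1

lemma En_real (n : ℕ) (hn : 1 ≤ n) : ((En n : ℕ) : ℝ) = 2*(n:ℝ)*((n:ℝ)-1) := by
  have hz : (En n : ℤ) = 2*(n:ℤ)*((n:ℤ)-1) := by
    rw [En]; push_cast; exact_mod_cast E_val n hn
  exact_mod_cast hz

lemma Tn_real (n : ℕ) (hn : 1 ≤ n) :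
    ((Tn n : ℕ) : ℝ) = ((2*(n:ℝ)-1)^3 - (2*(n:ℝ)-1))/3 := by
  have hz : 3 * (Tn n : ℤ) = (2*(n:ℤ)-1)^3 - (2*(n:ℤ)-1) := by
    have h := T_val (2*n-1)
    have hm : ((2*n-1 : ℕ) : ℤ) = 2*(n:ℤ)-1 := by omega
    rw [hm] at h
    rw [Tn]; push_cast
    exact_mod_cast h
  have : 3 * ((Tn n : ℕ) : ℝ) = (2*(n:ℝ)-1)^3 - (2*(n:ℝ)-1) := by exact_mod_cast hz
  linarith

lemma An_real (n : ℕ) (hn : 1 ≤ n) :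
    ((An n : ℕ) : ℝ) = (2*(n:ℝ)*(2*(n:ℝ)-1)*(4*(n:ℝ)-1))/6 := by
  have hz : 6 * (An n : ℤ) = 2*(n:ℤ)*(2*(n:ℤ)-1)*(4*(n:ℤ)-1) := by
    rw [An]; push_cast
    exact_mod_cast A_val n hn
  have : 6 * ((An n : ℕ) : ℝ) = 2*(n:ℝ)*(2*(n:ℝ)-1)*(4*(n:ℝ)-1) := by exact_mod_cast hz
  linarith

lemma poly_lim (a b c : ℝ) :
    Tendsto (fun n : ℕ => (a*(n:ℝ)^3 + b*(n:ℝ)^2 + c*(n:ℝ)) / (4*(n:ℝ)^3 - 4*(n:ℝ)^2))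
      atTop (nhds (a/4)) := by
  have hinv : Tendsto (fun n : ℕ => ((n:ℝ))⁻¹) atTop (nhds 0) :=
    tendsto_inv_atTop_zero.comp tendsto_natCast_atTop_atTop
  have hnum : Tendsto (fun n : ℕ => a + b*(n:ℝ)⁻¹ + c*((n:ℝ)⁻¹)^2) atTop
      (nhds (a + b*0 + c*0^2)) :=
    ((tendsto_const_nhds.add (tendsto_const_nhds.mul hinv)).add
      (tendsto_const_nhds.mul (hinv.pow 2)))
  have hden : Tendsto (fun n : ℕ => 4 - 4*(n:ℝ)⁻¹) atTop (nhds (4 - 4*0)) :=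
    tendsto_const_nhds.sub (tendsto_const_nhds.mul hinv)
  have hq := hnum.div hden (by norm_num)
  rw [show (a + b*0 + c*0^2)/(4-4*0) = a/4 by norm_num] at hq
  refine hq.congr' ?_
  filter_upwards [eventually_ge_atTop 2] with n hn
  have h2 : (2:ℝ) ≤ (n:ℝ) := by exact_mod_cast hn
  have hn0 : (n:ℝ) ≠ 0 := by positivity
  have hinv2 : (n:ℝ)⁻¹ ≤ (2:ℝ)⁻¹ := by
    apply inv_anti₀ <;> linarith
  have hd : (4:ℝ) - 4*(n:ℝ)⁻¹ ≠ 0 := by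
    have : (0:ℝ) < (n:ℝ)⁻¹ := by positivity
    norm_num at hinv2 ⊢
    intro hcon
    linarith
  show (a + b*(n:ℝ)⁻¹ + c*((n:ℝ)⁻¹)^2)/(4 - 4*(n:ℝ)⁻¹) = _
  rw [div_eq_div_iff hd (by nlinarith : (4*(n:ℝ)^3 - 4*(n:ℝ)^2) ≠ 0)]
  field_simp

lemma hden_cast (n : ℕ) (hn : 1 ≤ n) :
    ((4 * (n - 1) * n ^ 2 : ℕ) : ℝ) = 4*(n:ℝ)^3 - 4*(n:ℝ)^2 := by
  have h1 : ((n - 1 : ℕ) : ℝ) = (n:ℝ) - 1 := by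
    have : ((n - 1 : ℕ) : ℤ) = (n:ℤ) - 1 := by omega
    exact_mod_cast this
  push_cast [h1]
  ring


open Filter in
/-- Asymptotic normalized mutual attraction distances: with
`D(2n) = 4(n-1)n²` the maximum possible distance, the normalized distance of
`MA^{2n}` and `MD^{2n}` tends to `1`, while each other pair among
`{ID, MA, MD, CH}` has normalized distance tending to `2/3`. -/
theorem normalized_distances_extreme_matrices :
    Tendsto (fun n : ℕ =>
      (matDist (MAmat n) (MDmat n) : ℝ) / ((4 * (n - 1) * n ^ 2 : ℕ) : ℝ))
      atTop (nhds 1) ∧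
    Tendsto (fun n : ℕ =>
      (matDist (IDmat n) (MAmat n) : ℝ) / ((4 * (n - 1) * n ^ 2 : ℕ) : ℝ))
      atTop (nhds (2 / 3)) ∧
    Tendsto (fun n : ℕ =>
      (matDist (IDmat n) (MDmat n) : ℝ) / ((4 * (n - 1) * n ^ 2 : ℕ) : ℝ))
      atTop (nhds (2 / 3)) ∧
    Tendsto (fun n : ℕ =>
      (matDist (IDmat n) (CHmat n) : ℝ) / ((4 * (n - 1) * n ^ 2 : ℕ) : ℝ))
      atTop (nhds (2 / 3)) ∧
    Tendsto (fun n : ℕ =>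
      (matDist (MAmat n) (CHmat n) : ℝ) / ((4 * (n - 1) * n ^ 2 : ℕ) : ℝ))
      atTop (nhds (2 / 3)) ∧
    Tendsto (fun n : ℕ =>
      (matDist (MDmat n) (CHmat n) : ℝ) / ((4 * (n - 1) * n ^ 2 : ℕ) : ℝ))
      atTop (nhds (2 / 3)) := by
  have hTpoly : ∀ n : ℕ, 1 ≤ n → ((Tn n : ℕ) : ℝ)
      = (8/3)*(n:ℝ)^3 + (-4)*(n:ℝ)^2 + (4/3)*(n:ℝ) := by
    intro n hn; rw [Tn_real n hn]; ring
  have hEpoly : ∀ n : ℕ, 1 ≤ n → ((En n : ℕ) : ℝ) = 2*(n:ℝ)^2 - 2*(n:ℝ) := by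
    intro n hn; rw [En_real n hn]; ring
  have hApoly : ∀ n : ℕ, 1 ≤ n → ((An n : ℕ) : ℝ)
      = (8/3)*(n:ℝ)^3 + (-2)*(n:ℝ)^2 + (1/3)*(n:ℝ) := by
    intro n hn; rw [An_real n hn]; ring
  refine ⟨?_, ?_, ?_, ?_, ?_, ?_⟩
  · have h := poly_lim 4 (-4) 0
    rw [show (4:ℝ)/4 = 1 by norm_num] at h
    refine h.congr' ?_
    filter_upwards [eventually_ge_atTop 1] with n hn
    rw [hden_cast n hn, S1_eq n]
    push_cast
    rw [En_real n hn]
    congr 1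
    ring
  · have h := poly_lim (8/3) (-4) (4/3)
    rw [show (8/3:ℝ)/4 = 2/3 by norm_num] at h
    refine h.congr' ?_
    filter_upwards [eventually_ge_atTop 1] with n hn
    rw [hden_cast n hn, S2_eq n, hTpoly n hn]
  · have h := poly_lim (8/3) (-2) (-2/3)
    rw [show (8/3:ℝ)/4 = 2/3 by norm_num] at h
    refine h.congr' ?_
    filter_upwards [eventually_ge_atTop 1] with n hn
    rw [hden_cast n hn, S3_eq n hn]
    push_cast
    rw [hEpoly n hn, hTpoly n hn]
    congr 1
    ring
  · -- squeeze for ID-CH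
    have hlow := poly_lim (8/3) (-6) (7/3)
    have hup := poly_lim (8/3) 2 (-5/3)
    rw [show (8/3:ℝ)/4 = 2/3 by norm_num] at hlow hup
    refine tendsto_of_tendsto_of_tendsto_of_le_of_le' hlow hup ?_ ?_
    · filter_upwards [eventually_ge_atTop 2] with n hn
      have hn1 : 1 ≤ n := by omega
      have hb := (S6_bounds n hn1).2
      have hc : ((2*n-1:ℕ):ℝ) = 2*(n:ℝ)-1 := by
        have hcz : ((2*n-1:ℕ):ℤ) = 2*(n:ℤ)-1 := by omega
        exact_mod_cast hcz
      have hBr : ((2*n*(2*n-1):ℕ):ℝ) = 2*(n:ℝ)*(2*(n:ℝ)-1) := by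
        push_cast [hc]; ring
      have hbr : ((An n : ℕ) : ℝ) ≤ (matDist (IDmat n) (CHmat n) : ℝ)
          + (2*(n:ℝ)*(2*(n:ℝ)-1)) := by
        have h0 : ((An n : ℕ) : ℝ) ≤ ((matDist (IDmat n) (CHmat n) : ℕ) : ℝ)
            + ((2*n*(2*n-1) : ℕ) : ℝ) := by exact_mod_cast hb
        rw [hBr] at h0
        linarith
      rw [hden_cast n hn1]
      have hD : (0:ℝ) < 4*(n:ℝ)^3 - 4*(n:ℝ)^2 := by
        have h2 : (2:ℝ) ≤ (n:ℝ) := by exact_mod_cast hn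
        nlinarith
      rw [div_le_div_iff_of_pos_right hD]
      rw [hApoly n hn1] at hbr
      nlinarith [hbr]
    · filter_upwards [eventually_ge_atTop 2] with n hn
      have hn1 : 1 ≤ n := by omega
      have hb := (S6_bounds n hn1).1
      have hc : ((2*n-1:ℕ):ℝ) = 2*(n:ℝ)-1 := by
        have hcz : ((2*n-1:ℕ):ℤ) = 2*(n:ℤ)-1 := by omega
        exact_mod_cast hcz
      have hBr : ((2*n*(2*n-1):ℕ):ℝ) = 2*(n:ℝ)*(2*(n:ℝ)-1) := by
        push_cast [hc]; ring
      have hbr : (matDist (IDmat n) (CHmat n) : ℝ) ≤ ((An n : ℕ) : ℝ)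
          + (2*(n:ℝ)*(2*(n:ℝ)-1)) := by
        have h0 : ((matDist (IDmat n) (CHmat n) : ℕ) : ℝ) ≤ ((An n : ℕ) : ℝ)
            + ((2*n*(2*n-1) : ℕ) : ℝ) := by exact_mod_cast hb
        rw [hBr] at h0
        linarith
      rw [hden_cast n hn1]
      have hD : (0:ℝ) < 4*(n:ℝ)^3 - 4*(n:ℝ)^2 := by
        have h2 : (2:ℝ) ≤ (n:ℝ) := by exact_mod_cast hn
        nlinarith
      rw [div_le_div_iff_of_pos_right hD]
      rw [hApoly n hn1] at hbr
      nlinarith [hbr]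
  · have h := poly_lim (8/3) (-4) (4/3)
    rw [show (8/3:ℝ)/4 = 2/3 by norm_num] at h
    refine h.congr' ?_
    filter_upwards [eventually_ge_atTop 1] with n hn
    rw [hden_cast n hn, S4_eq n hn, hTpoly n hn]
  · have h := poly_lim (8/3) (-2) (-2/3)
    rw [show (8/3:ℝ)/4 = 2/3 by norm_num] at h
    refine h.congr' ?_
    filter_upwards [eventually_ge_atTop 1] with n hn
    rw [hden_cast n hn, S5_eq n hn]
    push_cast
    rw [hEpoly n hn, hTpoly n hn]
    congr 1
    ring
end
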